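/- Let D be an API-domain containing a field of characteristic 0 (equivalently, D is a ℚ-algebra). Then D is a Dedekind domain whose ideal class group is a torsion group. In particular, if D is a quasilocal API-domain containing a field of characteristic 0 and D is not a field, then D is a DVR. -/

import Mathlib

open Finset
open scoped nonZeroDivisors

/-- `D` is an almost principal ideal (API-) domain: for every nonempty set `S` of nonzero
elements of `D` there is a positive integer `n` such that the ideal generated by the `n`-th
powers of the elements of `S` is principal. -/
def IsAPIDomain (D : Type*) [CommRing D] : Prop :=
  ∀ S : Set D, S.Nonempty → (∀ a ∈ S, a ≠ 0) →
    ∃ n : ℕ, 0 < n ∧ (Ideal.span ((fun a => a ^ n) '' S)).IsPrincipal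

lemma signsum {n : ℕ} (s : Finset (Fin n)) :
    ∑ T ∈ (univ : Finset (Fin n)).powerset,
      (if s ⊆ T then ((-1 : ℤ)) ^ (n - #T) else 0) =
      if s = univ then 1 else 0 := by
  classical
  rw [Finset.sum_ite, Finset.sum_const_zero, add_zero]
  have hbij : ∑ T ∈ (univ : Finset (Fin n)).powerset.filter (fun T => s ⊆ T),
      ((-1 : ℤ)) ^ (n - #T) = ∑ U ∈ sᶜ.powerset, ((-1 : ℤ)) ^ (#(sᶜ) - #U) := by
    refine Finset.sum_nbij' (fun T => T \ s) (fun U => U ∪ s) ?_ ?_ ?_ ?_ ?_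
    · intro T hT
      simp only [mem_filter, mem_powerset] at hT
      exact mem_powerset.mpr (fun i hi => by
        simp only [mem_sdiff] at hi
        simp [mem_compl, hi.2])
    · intro U hU
      simp only [mem_powerset] at hU
      refine mem_filter.mpr ⟨mem_powerset.mpr (subset_univ _), subset_union_right⟩
    · intro T hT
      simp only [mem_filter, mem_powerset] at hT
      exact sdiff_union_of_subset hT.2
    · intro U hU
      simp only [mem_powerset] at hU
      show (U ∪ s) \ s = U
      rw [union_sdiff_right]
      exact sdiff_eq_self_of_disjoint (disjoint_left.mpr fun i hi => by
        have := hU hi; simp only [mem_compl] at this; exact this)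
    · intro T hT
      simp only [mem_filter, mem_powerset] at hT
      congr 1
      have h2 := card_le_card hT.1
      rw [card_univ, Fintype.card_fin] at h2
      have h1 := card_le_card hT.2
      rw [card_sdiff_of_subset hT.2, card_compl, Fintype.card_fin]
      omega
  rw [hbij]
  have hle : ∀ U ∈ sᶜ.powerset, ((-1 : ℤ)) ^ (#(sᶜ) - #U) = (-1) ^ #(sᶜ) * (-1) ^ #U := by
    intro U hU
    have h : #U ≤ #(sᶜ) := card_le_card (mem_powerset.mp hU)
    have : ((-1 : ℤ)) ^ #(sᶜ) = (-1) ^ (#(sᶜ) - #U) * (-1) ^ #U := by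
      rw [← pow_add]; congr 1; omega
    rw [this, mul_assoc, ← pow_add]
    have : ((-1 : ℤ)) ^ (#U + #U) = 1 := by
      rw [← two_mul, pow_mul]; norm_num
    rw [this, mul_one]
  rw [Finset.sum_congr rfl hle, ← Finset.mul_sum, Finset.sum_powerset_neg_one_pow_card]
  by_cases h : s = univ
  · simp [h]
  · have : sᶜ ≠ ∅ := by
      simp only [ne_eq, ← Finset.compl_eq_empty_iff] at *
      simpa using h
    simp [h, this]

lemma polarization {R : Type*} [CommRing R] (n : ℕ) (hn : 0 < n) (x : Fin n → R) :
    (n.factorial : R) * ∏ i, x i =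
      ∑ T ∈ (univ : Finset (Fin n)).powerset,
        (-1 : R) ^ (n - #T) * (∑ i ∈ T, x i) ^ n := by
  classical
  have expand : ∀ T ∈ (univ : Finset (Fin n)).powerset,
      (-1 : R) ^ (n - #T) * (∑ i ∈ T, x i) ^ n =
      ∑ k ∈ piAntidiag (univ : Finset (Fin n)) n,
        (if univ.filter (fun i => k i ≠ 0) ⊆ T then
          (-1 : R) ^ (n - #T) * ((Nat.multinomial univ k : R) * ∏ i, x i ^ k i) else 0) := by
    intro T hT
    rw [Finset.sum_pow_eq_sum_piAntidiag_of_commute T x (fun a _ b _ _ => Commute.all _ _) n,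
      Finset.mul_sum, ← Finset.sum_filter]
    have hset : (piAntidiag (univ : Finset (Fin n)) n).filter
        (fun k => univ.filter (fun i => k i ≠ 0) ⊆ T) = piAntidiag T n := by
      ext k
      constructor
      · intro hk
        obtain ⟨hk1, hk2⟩ := mem_filter.mp hk
        obtain ⟨h1, -⟩ := mem_piAntidiag.mp hk1
        have h2 : ∀ i, k i ≠ 0 → i ∈ T := fun i hi => hk2 (mem_filter.mpr ⟨mem_univ i, hi⟩)
        refine mem_piAntidiag.mpr ⟨?_, h2⟩
        have eq1 : T.sum k = univ.sum k := Finset.sum_subset (subset_univ T)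
          fun i _ hi => by_contra fun hne => hi (h2 i hne)
        exact eq1.trans h1
      · intro hk
        obtain ⟨h1, h2⟩ := mem_piAntidiag.mp hk
        refine mem_filter.mpr ⟨mem_piAntidiag.mpr ⟨?_, fun i _ => mem_univ i⟩, ?_⟩
        · have eq1 : T.sum k = univ.sum k := Finset.sum_subset (subset_univ T)
            fun i _ hi => by_contra fun hne => hi (h2 i hne)
          exact eq1.symm.trans h1
        · intro i hi
          exact h2 i (mem_filter.mp hi).2
    rw [hset]
    refine Finset.sum_congr rfl fun k hk => ?_
    obtain ⟨hs, hsupp⟩ := Finset.mem_piAntidiag.mp hk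
    rw [Finset.noncommProd_eq_prod]
    congr 2
    · congr 1
      unfold Nat.multinomial
      congr 1
      · rw [Finset.sum_subset (subset_univ T) fun i _ hi =>
          by_contra fun hne => hi (hsupp i hne)]
      · rw [Finset.prod_subset (subset_univ T) fun i _ hi => by
          rw [not_imp_comm.mp (hsupp i) hi]; rfl]
    · exact Finset.prod_subset (subset_univ T) fun i _ hi => by
        rw [not_imp_comm.mp (hsupp i) hi, pow_zero]
  rw [Finset.sum_congr rfl expand, Finset.sum_comm]
  have hsign : ∀ k : Fin n → ℕ,
      ∑ T ∈ (univ : Finset (Fin n)).powerset,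
        (if univ.filter (fun i => k i ≠ 0) ⊆ T then (-1 : R) ^ (n - #T) else 0) =
      if univ.filter (fun i => k i ≠ 0) = univ then 1 else 0 := by
    intro k
    have h := signsum (univ.filter (fun i => k i ≠ 0))
    calc ∑ T ∈ (univ : Finset (Fin n)).powerset,
          (if univ.filter (fun i => k i ≠ 0) ⊆ T then (-1 : R) ^ (n - #T) else 0)
        = ((∑ T ∈ (univ : Finset (Fin n)).powerset,
            (if univ.filter (fun i => k i ≠ 0) ⊆ T then (-1 : ℤ) ^ (n - #T) else 0) : ℤ) : R) := by
          push_cast [apply_ite (Int.cast : ℤ → R)]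
          rfl
      _ = _ := by rw [h]; push_cast [apply_ite (Int.cast : ℤ → R)]; rfl
  have step2 : ∀ k ∈ piAntidiag (univ : Finset (Fin n)) n,
      ∑ T ∈ (univ : Finset (Fin n)).powerset,
        (if univ.filter (fun i => k i ≠ 0) ⊆ T then
          (-1 : R) ^ (n - #T) * ((Nat.multinomial univ k : R) * ∏ i, x i ^ k i) else 0) =
      if univ.filter (fun i => k i ≠ 0) = univ then
        (Nat.multinomial univ k : R) * ∏ i, x i ^ k i else 0 := by
    intro k _
    have : ∀ T ∈ (univ : Finset (Fin n)).powerset,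
        (if univ.filter (fun i => k i ≠ 0) ⊆ T then
          (-1 : R) ^ (n - #T) * ((Nat.multinomial univ k : R) * ∏ i, x i ^ k i) else 0) =
        (if univ.filter (fun i => k i ≠ 0) ⊆ T then (-1 : R) ^ (n - #T) else 0) *
          ((Nat.multinomial univ k : R) * ∏ i, x i ^ k i) := by
      intro T _
      split_ifs <;> simp
    rw [Finset.sum_congr rfl this, ← Finset.sum_mul, hsign k]
    split_ifs <;> simp
  rw [Finset.sum_congr rfl step2]
  have hmem : (fun _ : Fin n => 1) ∈ piAntidiag (univ : Finset (Fin n)) n := by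
    rw [mem_piAntidiag]
    exact ⟨by simp, fun i _ => mem_univ i⟩
  rw [Finset.sum_eq_single_of_mem (fun _ : Fin n => 1) hmem]
  · have hcond : (univ.filter fun i : Fin n => (1 : ℕ) ≠ 0) = univ := by simp
    rw [if_pos hcond]
    simp only [pow_one]
    congr 1
    unfold Nat.multinomial
    simp
  · intro k hk hne
    rw [mem_piAntidiag] at hk
    rw [if_neg]
    intro hfil
    have hpos : ∀ i : Fin n, 1 ≤ k i := by
      intro i
      have : i ∈ univ.filter fun i => k i ≠ 0 := by rw [hfil]; exact mem_univ i
      have := (mem_filter.mp this).2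
      omega
    have hlt : ∃ j : Fin n, 1 < k j := by
      by_contra hno
      push_neg at hno
      exact hne (funext fun i => le_antisymm (hno i) (hpos i))
    obtain ⟨j, hj⟩ := hlt
    have := Finset.sum_lt_sum (f := fun _ : Fin n => 1) (g := k)
      (fun i _ => hpos i) ⟨j, mem_univ j, hj⟩
    rw [hk.1] at this
    simp at this

lemma pow_le_span_pow {D : Type*} [CommRing D] [Algebra ℚ D] (I : Ideal D) (n : ℕ)
    (hn : 0 < n) :
    I ^ n ≤ Ideal.span ((fun a => a ^ n) '' (I : Set D)) := by
  classical
  set J := Ideal.span ((fun a => a ^ n) '' (I : Set D)) with hJ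
  conv_lhs => rw [← Ideal.span_eq I]
  rw [Ideal.span, Submodule.span_pow, Submodule.span_le]
  intro a ha
  obtain ⟨f, hf⟩ := Set.mem_pow.mp ha
  rw [List.prod_ofFn] at hf
  have key : (n.factorial : D) * a ∈ J := by
    rw [← hf, polarization n hn fun i => (f i : D)]
    refine Ideal.sum_mem J fun T _ => ?_
    refine Ideal.mul_mem_left _ _ ?_
    refine Ideal.subset_span ⟨∑ i ∈ T, (f i : D), ?_, rfl⟩
    exact Ideal.sum_mem I fun i _ => (f i).2
  have hu : IsUnit (n.factorial : D) := by
    have h1 : (n.factorial : D) = algebraMap ℚ D (n.factorial : ℚ) := by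
      rw [map_natCast]
    rw [h1]
    exact IsUnit.map (algebraMap ℚ D)
      (isUnit_iff_ne_zero.mpr (by positivity))
  obtain ⟨u, hu'⟩ := hu
  have ha' : a = (↑u⁻¹ : D) * ((n.factorial : D) * a) := by
    rw [← mul_assoc, ← hu', Units.inv_mul, one_mul]
  rw [ha']
  exact Ideal.mul_mem_left _ _ key


lemma exists_pow_isPrincipal {D : Type*} [CommRing D] [IsDomain D] [Algebra ℚ D]
    (hD : IsAPIDomain D) (I : Ideal D) (hI : I ≠ ⊥) :
    ∃ n : ℕ, 0 < n ∧ (I ^ n).IsPrincipal := by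
  obtain ⟨x0, hx0I, hx0⟩ := Submodule.exists_mem_ne_zero_of_ne_bot hI
  obtain ⟨n, hn, hp⟩ := hD {x : D | x ∈ I ∧ x ≠ 0} ⟨x0, hx0I, hx0⟩ (fun a ha => ha.2)
  refine ⟨n, hn, ?_⟩
  have heq : Ideal.span ((fun a => a ^ n) '' {x : D | x ∈ I ∧ x ≠ 0}) = I ^ n := by
    apply le_antisymm
    · rw [Ideal.span_le]
      rintro _ ⟨x, hx, rfl⟩
      exact Ideal.pow_mem_pow hx.1 n
    · refine le_trans (pow_le_span_pow I n hn) ?_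
      rw [Ideal.span_le]
      rintro _ ⟨x, hx, rfl⟩
      by_cases hx0 : x = 0
      · simp only [hx0, zero_pow hn.ne']
        exact Ideal.zero_mem _
      · exact Ideal.subset_span ⟨x, ⟨hx, hx0⟩, rfl⟩
  rwa [heq] at hp



/-- an API-domain containing a field of characteristic `0` (i.e. a `ℚ`-algebra)
is a Dedekind domain with torsion class group; in particular a quasilocal API-domain
containing a field of characteristic `0` that is not a field is a DVR. -/
theorem stmt_13 (D : Type*) [CommRing D] [IsDomain D] [Algebra ℚ D]
    (hD : IsAPIDomain D) :
    (IsDedekindDomain D ∧ ∀ x : ClassGroup D, ∃ n : ℕ, 0 < n ∧ x ^ n = 1) ∧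
      (IsLocalRing D → ¬IsField D → IsDiscreteValuationRing D) := by
  have hded : IsDedekindDomain D := by
    rw [isDedekindDomain_iff_mul_inv_cancel (K := FractionRing D)]
    intro I hI
    rw [FractionalIdeal.mul_inv_cancel_iff_isUnit (FractionRing D)]
    obtain ⟨a, aI, ha, rfl⟩ := FractionalIdeal.exists_eq_spanSingleton_mul I
    have haI : aI ≠ ⊥ := by
      rintro rfl
      simp at hI
    obtain ⟨n, hn, hp⟩ := exists_pow_isPrincipal hD aI haI
    obtain ⟨c, hc⟩ := hp
    have hc0 : c ≠ 0 := by
      rintro rfl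
      obtain ⟨x0, hx0I, hx0⟩ := Submodule.exists_mem_ne_zero_of_ne_bot haI
      have : x0 ^ n ∈ aI ^ n := Ideal.pow_mem_pow hx0I n
      rw [hc] at this
      simp only [Submodule.span_zero_singleton, Submodule.mem_bot] at this
      exact pow_ne_zero n hx0 this
    have hmapc : algebraMap D (FractionRing D) c ≠ 0 := fun h =>
      hc0 ((injective_iff_map_eq_zero _).mp (IsFractionRing.injective D (FractionRing D)) _ h)
    have hmapa : algebraMap D (FractionRing D) a ≠ 0 := fun h =>
      ha ((injective_iff_map_eq_zero _).mp (IsFractionRing.injective D (FractionRing D)) _ h)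
    have h1 : IsUnit ((aI : FractionalIdeal D⁰ (FractionRing D))) := by
      rw [← isUnit_pow_iff hn.ne']
      have heq : (aI : FractionalIdeal D⁰ (FractionRing D)) ^ n =
          FractionalIdeal.spanSingleton D⁰ (algebraMap D (FractionRing D) c) := by
        rw [← FractionalIdeal.coeIdeal_pow, hc]
        exact FractionalIdeal.coeIdeal_span_singleton c
      rw [heq]
      exact isUnit_iff_exists_inv.mpr
        ⟨FractionalIdeal.spanSingleton D⁰ (algebraMap D (FractionRing D) c)⁻¹, by
          rw [FractionalIdeal.spanSingleton_mul_spanSingleton, mul_inv_cancel₀ hmapc,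
            FractionalIdeal.spanSingleton_one]⟩
    have h2 : IsUnit (FractionalIdeal.spanSingleton D⁰
        (algebraMap D (FractionRing D) a)⁻¹) := by
      exact isUnit_iff_exists_inv.mpr
        ⟨FractionalIdeal.spanSingleton D⁰ (algebraMap D (FractionRing D) a), by
          rw [FractionalIdeal.spanSingleton_mul_spanSingleton, inv_mul_cancel₀ hmapa,
            FractionalIdeal.spanSingleton_one]⟩
    exact h2.mul h1
  refine ⟨⟨hded, ?_⟩, ?_⟩
  · intro x
    obtain ⟨I, rfl⟩ := ClassGroup.mk0_surjective x
    have hIne : (I : Ideal D) ≠ ⊥ := mem_nonZeroDivisors_iff_ne_zero.mp I.2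
    obtain ⟨n, hn, hp⟩ := exists_pow_isPrincipal hD I.1 hIne
    refine ⟨n, hn, ?_⟩
    rw [← map_pow]
    have hIpow : (I ^ n : (Ideal D)⁰) = ⟨(I : Ideal D) ^ n, pow_mem I.2 n⟩ :=
      Subtype.ext (SubmonoidClass.coe_pow I n)
    rw [hIpow, ClassGroup.mk0_eq_one_iff]
    exact hp
  · intro hloc hnf
    exact ((IsDiscreteValuationRing.TFAE D hnf).out 2 0).mp hded
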